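/- Let G be a group, χ : G → (ℝ, +) a nonzero homomorphism, G̃ ≤ G a subgroup, and N a normal subgroup of G with N ⊆ ker χ ∩ G̃. Assume that G̃_χ := G̃ ∩ G_χ ⊆ N_G(K)·N for every finite subgroup K of G̃. Then G̃_χ conjugates finite subgroups: whenever H₁, H₂ are finite subgroups of G̃ and g ∈ G̃_χ satisfies H₁g = gH₂, there exists h ∈ ker χ ∩ G̃ with h⁻¹H₁h = H₂. -/

import Mathlib

/-- let `χ : G → (ℝ, +)` be a nonzero homomorphism, `G̃ ≤ G` a subgroup
and `N ⊴ G` with `N ⊆ ker χ ∩ G̃`.  If `G̃_χ ⊆ N_G(K)·N` for every finite subgroup `K`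
of `G̃`, then `G̃_χ` conjugates finite subgroups: whenever `H₁, H₂` are finite subgroups
of `G̃` and `g ∈ G̃_χ` satisfies `H₁g = gH₂`, there is `h ∈ ker χ ∩ G̃` with `h⁻¹H₁h = H₂`. -/
theorem stmt7 {G : Type*} [Group G] (χ : G → ℝ)
    (hhom : ∀ a b : G, χ (a * b) = χ a + χ b) (hne : ∃ g : G, χ g ≠ 0)
    (Gt : Subgroup G) (N : Subgroup G) (hNnorm : N.Normal)
    (hNker : ∀ n ∈ N, χ n = 0) (hNle : N ≤ Gt)
    (hyp : ∀ K : Subgroup G, (K : Set G).Finite → K ≤ Gt →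
      ∀ g ∈ Gt, 0 ≤ χ g → ∃ a ∈ Subgroup.normalizer (K : Set G), ∃ n ∈ N, g = a * n) :
    ∀ H₁ H₂ : Subgroup G, (H₁ : Set G).Finite → (H₂ : Set G).Finite →
      H₁ ≤ Gt → H₂ ≤ Gt → ∀ g ∈ Gt, 0 ≤ χ g →
        (· * g) '' (H₁ : Set G) = (g * ·) '' (H₂ : Set G) →
        ∃ h ∈ Gt, χ h = 0 ∧ (fun a => h⁻¹ * a * h) '' (H₁ : Set G) = (H₂ : Set G) := by
  intro H₁ H₂ h₁fin h₂fin h₁le h₂le g hg hχg hset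
  obtain ⟨a, ha, n, hn, rfl⟩ := hyp H₁ h₁fin h₁le g hg hχg
  refine ⟨n, hNle hn, hNker n hn, ?_⟩
  rw [Subgroup.mem_normalizer_iff] at ha
  -- key : conjugation by (a*n) sends H₁ into/onto H₂
  have key : ∀ x : G, x ∈ H₁ ↔ (a * n)⁻¹ * x * (a * n) ∈ H₂ := by
    intro x
    constructor
    · intro hx
      have hmem : x * (a * n) ∈ (· * (a * n)) '' (H₁ : Set G) := ⟨x, hx, rfl⟩
      rw [hset] at hmem
      obtain ⟨y, hy, hxy⟩ := hmem
      have : (a * n)⁻¹ * x * (a * n) = y := by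
        have h : a * n * y = x * (a * n) := hxy
        rw [mul_assoc, ← h]
        group
      rw [this]; exact hy
    · intro hx
      have hmem : (a * n) * ((a * n)⁻¹ * x * (a * n)) ∈
          ((a * n) * ·) '' (H₂ : Set G) := ⟨_, hx, rfl⟩
      rw [← hset] at hmem
      obtain ⟨z, hz, hzx⟩ := hmem
      have hzx' : z * (a * n) = (a * n) * ((a * n)⁻¹ * x * (a * n)) := hzx
      have : z = x := by
        have := hzx'
        rw [show (a * n) * ((a * n)⁻¹ * x * (a * n)) = x * (a * n) by group] at this
        exact mul_right_cancel this
      rw [← this]; exact hz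
  ext y
  simp only [Set.mem_image, SetLike.mem_coe]
  constructor
  · rintro ⟨x, hx, rfl⟩
    have hx' : a * x * a⁻¹ ∈ H₁ := (ha x).mp hx
    have := (key _).mp hx'
    rwa [show (a * n)⁻¹ * (a * x * a⁻¹) * (a * n) = n⁻¹ * x * n by group] at this
  · intro hy
    have hx' : a * (n * y * n⁻¹) * a⁻¹ ∈ H₁ := by
      rw [(key _)]
      rwa [show (a * n)⁻¹ * (a * (n * y * n⁻¹) * a⁻¹) * (a * n) = y by group]
    have hx : n * y * n⁻¹ ∈ H₁ := (ha _).mpr hx'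
    exact ⟨n * y * n⁻¹, hx, by group⟩
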